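/- arXiv:2511.14516 — 3 statements merged into one kernel-verified Lean document; each statement's English description precedes it below -/
import Mathlib

section
/- If μ_{i-1} | data has distribution N((α' x + μ_0 ρ_0)/(ρ_0 + α'), α'/(ρ_0 + α')²) with α' = β(t_{i-1}), and μ_i = (ρ_{i-1} μ_{i-1} + α_i y)/(ρ_{i-1} + α_i) where y ~ N(x, 1/α_i) independently and ρ_{i-1} = ρ_0 + β(t_{i-1}), then μ_i has distribution N((β(t_i) x + μ_0 ρ_0)/(ρ_0 + β(t_i)), β(t_i)/(ρ_0 + β(t_i))²), where β(t_i) = β(t_{i-1}) + α_i. -/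
open MeasureTheory ProbabilityTheory

open Real
open scoped NNReal ENNReal

lemma my_gaussianPDFReal_mul (m1 m2 : ℝ) (v1 v2 : ℝ≥0) (h1 : v1 ≠ 0) (h2 : v2 ≠ 0) (z x : ℝ) :
    gaussianPDFReal m1 v1 x * gaussianPDFReal m2 v2 (z - x) =
      gaussianPDFReal (m1 + m2) (v1 + v2) z *
        gaussianPDFReal ((m1 * v2 + (z - m2) * v1) / (v1 + v2)) (v1 * v2 / (v1 + v2)) x := by
  have hv1 : (0:ℝ) < v1 := lt_of_le_of_ne v1.coe_nonneg (by exact_mod_cast (Ne.symm h1))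
  have hv2 : (0:ℝ) < v2 := lt_of_le_of_ne v2.coe_nonneg (by exact_mod_cast (Ne.symm h2))
  have hsum : (0:ℝ) < (v1:ℝ) + v2 := by linarith
  simp only [gaussianPDFReal, NNReal.coe_add, NNReal.coe_mul, NNReal.coe_div]
  rw [mul_mul_mul_comm, mul_mul_mul_comm ((√(2 * π * ((v1:ℝ) + v2)))⁻¹)]
  congr 1
  · rw [← mul_inv, ← mul_inv, ← Real.sqrt_mul (by positivity), ← Real.sqrt_mul (by positivity)]
    congr 1
    field_simp
  · rw [← Real.exp_add, ← Real.exp_add]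
    congr 1
    field_simp
    ring

lemma my_lintegral_gaussianPDF_conv (m1 m2 : ℝ) (v1 v2 : ℝ≥0) (h1 : v1 ≠ 0) (h2 : v2 ≠ 0)
    (z : ℝ) :
    ∫⁻ x, gaussianPDF m1 v1 x * gaussianPDF m2 v2 (z - x) = gaussianPDF (m1 + m2) (v1 + v2) z := by
  have hw : v1 * v2 / (v1 + v2) ≠ 0 := by
    apply div_ne_zero (mul_ne_zero h1 h2)
    simp [h1, add_eq_zero]
  calc ∫⁻ x, gaussianPDF m1 v1 x * gaussianPDF m2 v2 (z - x)
      = ∫⁻ x, gaussianPDF (m1 + m2) (v1 + v2) z *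
          gaussianPDF ((m1 * v2 + (z - m2) * v1) / (v1 + v2)) (v1 * v2 / (v1 + v2)) x := by
        congr 1 with x
        simp only [gaussianPDF, ← ENNReal.ofReal_mul (gaussianPDFReal_nonneg _ _ _)]
        rw [my_gaussianPDFReal_mul m1 m2 v1 v2 h1 h2 z x]
    _ = gaussianPDF (m1 + m2) (v1 + v2) z := by
        rw [lintegral_const_mul _ (measurable_gaussianPDF _ _),
          lintegral_gaussianPDF_eq_one _ hw, mul_one]

lemma my_gaussianReal_conv (m1 m2 : ℝ) (v1 v2 : ℝ≥0) :
    ((gaussianReal m1 v1).prod (gaussianReal m2 v2)).map (fun p : ℝ × ℝ => p.1 + p.2) =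
      gaussianReal (m1 + m2) (v1 + v2) := by
  by_cases h1 : v1 = 0
  · subst h1
    rw [gaussianReal_zero_var, Measure.dirac_prod, Measure.map_map measurable_add
      (measurable_prodMk_left), zero_add]
    have : ((fun p : ℝ × ℝ => p.1 + p.2) ∘ Prod.mk m1) = fun y => m1 + y := rfl
    rw [this, gaussianReal_map_const_add, add_comm]
  by_cases h2 : v2 = 0
  · subst h2
    rw [gaussianReal_zero_var, Measure.prod_dirac, Measure.map_map measurable_add
      (measurable_prodMk_right), add_zero]
    have : ((fun p : ℝ × ℝ => p.1 + p.2) ∘ (fun x => (x, m2))) = fun y => y + m2 := rfl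
    rw [this, gaussianReal_map_add_const]
  have hsum : v1 + v2 ≠ 0 := by simp [h1, add_eq_zero]
  ext s hs
  rw [Measure.map_apply measurable_add hs, Measure.prod_apply (measurable_add hs)]
  have hmk : ∀ x : ℝ, Prod.mk x ⁻¹' ((fun p : ℝ × ℝ => p.1 + p.2) ⁻¹' s) = {y | x + y ∈ s} := by
    intro x; rfl
  set F : ℝ → ℝ≥0∞ := s.indicator (fun _ => 1) with hF
  have hFmeas : Measurable F := measurable_const.indicator hs
  have step1 : ∀ x : ℝ, gaussianReal m2 v2 {y | x + y ∈ s} =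
      ∫⁻ z, F z * gaussianPDF m2 v2 (z - x) := by
    intro x
    have hset : MeasurableSet {y : ℝ | x + y ∈ s} := (measurable_const_add x) hs
    rw [gaussianReal_apply _ h2 _, ← lintegral_indicator hset]
    have : ∀ y : ℝ, ({y : ℝ | x + y ∈ s}).indicator (gaussianPDF m2 v2) y
        = (fun z => F z * gaussianPDF m2 v2 (z - x)) (x + y) := by
      intro y
      by_cases hy : x + y ∈ s
      · simp [hF, Set.indicator_of_mem, hy, Set.mem_setOf_eq, add_sub_cancel_left]
      · simp [hF, Set.indicator_of_notMem, hy, Set.mem_setOf_eq]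
    simp_rw [this]
    exact lintegral_add_left_eq_self (fun z => F z * gaussianPDF m2 v2 (z - x)) x
  simp_rw [hmk, step1]
  have hmeas2 : Measurable (Function.uncurry fun x z => F z * gaussianPDF m2 v2 (z - x)) := by
    apply Measurable.mul
    · exact hFmeas.comp measurable_snd
    · exact (measurable_gaussianPDF m2 v2).comp (measurable_snd.sub measurable_fst)
  rw [gaussianReal_of_var_ne_zero _ h1,
    lintegral_withDensity_eq_lintegral_mul _ (measurable_gaussianPDF m1 v1)
      hmeas2.lintegral_prod_right]
  simp only [Pi.mul_apply]
  have swap : ∫⁻ x, gaussianPDF m1 v1 x * ∫⁻ z, F z * gaussianPDF m2 v2 (z - x)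
      = ∫⁻ z, ∫⁻ x, gaussianPDF m1 v1 x * (F z * gaussianPDF m2 v2 (z - x)) := by
    have step : ∀ x : ℝ, gaussianPDF m1 v1 x * ∫⁻ z, F z * gaussianPDF m2 v2 (z - x)
        = ∫⁻ z, gaussianPDF m1 v1 x * (F z * gaussianPDF m2 v2 (z - x)) := by
      intro x
      exact (lintegral_const_mul _ (hFmeas.mul ((measurable_gaussianPDF m2 v2).comp
        (measurable_id.sub_const x)))).symm
    simp_rw [step]
    rw [lintegral_lintegral_swap]
    exact ((measurable_gaussianPDF m1 v1).comp measurable_fst |>.mul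
      ((hFmeas.comp measurable_snd).mul ((measurable_gaussianPDF m2 v2).comp
        (measurable_snd.sub measurable_fst)))).aemeasurable
  rw [swap]
  have inner : ∀ z, ∫⁻ x, gaussianPDF m1 v1 x * (F z * gaussianPDF m2 v2 (z - x))
      = F z * gaussianPDF (m1 + m2) (v1 + v2) z := by
    intro z
    have : ∀ x, gaussianPDF m1 v1 x * (F z * gaussianPDF m2 v2 (z - x))
        = F z * (gaussianPDF m1 v1 x * gaussianPDF m2 v2 (z - x)) := by
      intro x; ring
    simp_rw [this]
    have hm : Measurable fun x => gaussianPDF m1 v1 x * gaussianPDF m2 v2 (z - x) :=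
      (measurable_gaussianPDF _ _).mul
        ((measurable_gaussianPDF _ _).comp (measurable_const.sub measurable_id))
    rw [lintegral_const_mul _ hm, my_lintegral_gaussianPDF_conv m1 m2 v1 v2 h1 h2 z]
  simp_rw [inner]
  have : ∀ z, F z * gaussianPDF (m1 + m2) (v1 + v2) z
      = s.indicator (gaussianPDF (m1 + m2) (v1 + v2)) z := by
    intro z
    by_cases hz : z ∈ s <;> simp [hF, hz]
  simp_rw [this]
  rw [lintegral_indicator hs _, ← gaussianReal_apply _ hsum]


lemma my_aemeasurable_of_map_gaussian {Ω : Type*} [MeasurableSpace Ω] {P : Measure Ω}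
    [IsProbabilityMeasure P] {X : Ω → ℝ} {m : ℝ} {v : ℝ≥0}
    (hX : Measure.map X P = gaussianReal m v) : AEMeasurable X P := by
  by_contra h
  rw [Measure.map_of_not_aemeasurable h] at hX
  exact (IsProbabilityMeasure.ne_zero (gaussianReal m v)) hX.symm

lemma my_indepFun_gaussian_add {Ω : Type*} [MeasurableSpace Ω] (P : Measure Ω)
    [IsProbabilityMeasure P] {A Y : Ω → ℝ} (hAY : IndepFun A Y P) {m1 m2 : ℝ} {v1 v2 : ℝ≥0}
    (hA : Measure.map A P = gaussianReal m1 v1) (hY : Measure.map Y P = gaussianReal m2 v2) :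
    Measure.map (fun ω => A ω + Y ω) P = gaussianReal (m1 + m2) (v1 + v2) := by
  have hAm : AEMeasurable A P := my_aemeasurable_of_map_gaussian hA
  have hYm : AEMeasurable Y P := my_aemeasurable_of_map_gaussian hY
  have hpair : Measure.map (fun ω => (A ω, Y ω)) P =
      (gaussianReal m1 v1).prod (gaussianReal m2 v2) := by
    rw [← hA, ← hY]
    exact (indepFun_iff_map_prod_eq_prod_map_map hAm hYm).mp hAY
  have h1 : Measure.map (fun ω => A ω + Y ω) P =
      Measure.map ((fun p : ℝ × ℝ => p.1 + p.2) ∘ fun ω => (A ω, Y ω)) P := rfl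
  rw [h1, ← AEMeasurable.map_map_of_aemeasurable measurable_add.aemeasurable (hAm.prodMk hYm),
    hpair, my_gaussianReal_conv]

lemma my_map_const_mul {Ω : Type*} [MeasurableSpace Ω] {P : Measure Ω}
    [IsProbabilityMeasure P] {X : Ω → ℝ} {m : ℝ} {v : ℝ≥0}
    (hX : Measure.map X P = gaussianReal m v) (c : ℝ) :
    Measure.map (fun ω => c * X ω) P = gaussianReal (c * m) (NNReal.mk (c ^ 2) (sq_nonneg _) * v) := by
  have hXm : AEMeasurable X P := my_aemeasurable_of_map_gaussian hX
  have h1 : Measure.map (fun ω => c * X ω) P = Measure.map ((c * ·) ∘ X) P := rfl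
  rw [h1, ← AEMeasurable.map_map_of_aemeasurable (measurable_const_mul c).aemeasurable hXm, hX,
    gaussianReal_map_const_mul]

/-- Additivity of Bayesian updates for the mean parameter of a Gaussian component:
if `μ_{i-1} ~ N((β' x + μ₀ρ₀)/(ρ₀+β'), β'/(ρ₀+β')²)` with `β' = β(t_{i-1})`, and
`μ_i = (ρ_{i-1} μ_{i-1} + α y)/(ρ_{i-1} + α)` with `y ~ N(x, 1/α)` independent and
`ρ_{i-1} = ρ₀ + β'`, then `μ_i ~ N((β(t_i) x + μ₀ρ₀)/(ρ₀+β(t_i)), β(t_i)/(ρ₀+β(t_i))²)`,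
where `β(t_i) = β' + α`. -/
theorem stmt_2 {Ω : Type*} [MeasurableSpace Ω] (P : Measure Ω) [IsProbabilityMeasure P]
    (x μ₀ ρ₀ α β' : ℝ) (hρ₀ : 0 < ρ₀) (hα : 0 < α) (hβ' : 0 ≤ β')
    (A Y : Ω → ℝ) (hAY : IndepFun A Y P)
    (hA : Measure.map A P =
      gaussianReal ((β' * x + μ₀ * ρ₀) / (ρ₀ + β')) (Real.toNNReal (β' / (ρ₀ + β') ^ 2)))
    (hY : Measure.map Y P = gaussianReal x (Real.toNNReal α⁻¹)) :
    Measure.map (fun ω => ((ρ₀ + β') * A ω + α * Y ω) / ((ρ₀ + β') + α)) P =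
      gaussianReal (((β' + α) * x + μ₀ * ρ₀) / (ρ₀ + (β' + α)))
        (Real.toNNReal ((β' + α) / (ρ₀ + (β' + α)) ^ 2)) := by
  have hc1 : (0:ℝ) < ρ₀ + β' := by linarith
  have hs : (0:ℝ) < (ρ₀ + β') + α := by linarith
  -- scaled variables
  have hA' := my_map_const_mul hA (ρ₀ + β')
  have hY' := my_map_const_mul hY α
  have hAY' : IndepFun (fun ω => (ρ₀ + β') * A ω) (fun ω => α * Y ω) P :=
    hAY.comp (measurable_const_mul _) (measurable_const_mul _)
  have hsum := my_indepFun_gaussian_add P hAY' hA' hY'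
  have hfinal := my_map_const_mul hsum ((ρ₀ + β') + α)⁻¹
  have hfun : (fun ω => ((ρ₀ + β') * A ω + α * Y ω) / ((ρ₀ + β') + α)) =
      (fun ω => ((ρ₀ + β') + α)⁻¹ * ((fun ω => (ρ₀ + β') * A ω) ω + (fun ω => α * Y ω) ω)) := by
    funext ω; rw [div_eq_inv_mul]
  rw [hfun, hfinal]
  congr 1
  · field_simp
    ring
  · apply NNReal.eq
    push_cast [NNReal.coe_mul, Real.coe_toNNReal _ (by positivity : (0:ℝ) ≤ β' / (ρ₀ + β') ^ 2),
      Real.coe_toNNReal _ (le_of_lt (inv_pos.mpr hα)),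
      Real.coe_toNNReal _ (by positivity : (0:ℝ) ≤ (β' + α) / (ρ₀ + (β' + α)) ^ 2)]
    field_simp
    ring
end

section
/- Let p_A and p_B be Matrix Fisher distributions on SO(3) with parameters XλI and X'λI respectively, where X, X' ∈ SO(3) and λ > 0. Then the KL divergence satisfies D_KL(p_A ‖ p_B) = λ · E_{Q ~ M(λI)}[tr(Q) − tr(ΔᵀQ)] where Δ = XᵀX', and if E_{Q ~ M(λI)}[Q] = a(λ)I then D_KL(p_A ‖ p_B) = λ a(λ)(3 − tr(Δ)). -/
open Matrix MeasureTheory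

instance : MeasurableSpace (Matrix (Fin 3) (Fin 3) ℝ) :=
  inferInstanceAs (MeasurableSpace (Fin 3 → Fin 3 → ℝ))

/-- A 3×3 real matrix is a rotation matrix (element of SO(3)). -/
def IsSO3 (M : Matrix (Fin 3) (Fin 3) ℝ) : Prop := Mᵀ * M = 1 ∧ M.det = 1

lemma aux_entry_abs_le (M : Matrix (Fin 3) (Fin 3) ℝ) (h : Mᵀ * M = 1) (i j : Fin 3) :
    |M i j| ≤ 1 := by
  have h1 : (Mᵀ * M) j j = 1 := by rw [h]; simp [Matrix.one_apply]
  rw [Matrix.mul_apply] at h1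
  simp only [Matrix.transpose_apply] at h1
  have h2 : M i j * M i j ≤ 1 := by
    calc M i j * M i j ≤ ∑ k, M k j * M k j :=
          Finset.single_le_sum (f := fun k => M k j * M k j)
            (fun k _ => mul_self_nonneg _) (Finset.mem_univ i)
      _ = 1 := h1
  nlinarith [abs_nonneg (M i j), abs_mul_abs_self (M i j)]

lemma aux_trace_le (M : Matrix (Fin 3) (Fin 3) ℝ) (h : Mᵀ * M = 1) :
    |M.trace| ≤ 3 := by
  have hdef : M.trace = ∑ i, M i i := rfl
  rw [hdef]
  calc |∑ i, M i i| ≤ ∑ i : Fin 3, |M i i| := Finset.abs_sum_le_sum_abs _ _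
    _ ≤ ∑ _i : Fin 3, (1:ℝ) := Finset.sum_le_sum fun i _ => aux_entry_abs_le M h i i
    _ = 3 := by simp

lemma aux_meas_entry (i j : Fin 3) : Measurable (fun R : Matrix (Fin 3) (Fin 3) ℝ => R i j) :=
  (measurable_pi_apply j).comp (measurable_pi_apply i)

lemma aux_meas_trace : Measurable (fun R : Matrix (Fin 3) (Fin 3) ℝ => R.trace) := by
  have hdef : (fun R : Matrix (Fin 3) (Fin 3) ℝ => R.trace) = fun R => ∑ i, R i i := rfl
  rw [hdef]
  exact Finset.measurable_sum _ fun i _ => aux_meas_entry i i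

lemma aux_trace_transpose_mul (A R : Matrix (Fin 3) (Fin 3) ℝ) :
    (Aᵀ * R).trace = ∑ i, ∑ j, A i j * R i j := by
  have h : (Aᵀ * R).trace = ∑ j, ∑ i, A i j * R i j := by
    simp [Matrix.trace, Matrix.diag, Matrix.mul_apply]
  rw [h, Finset.sum_comm]

lemma aux_meas_traceMul (A : Matrix (Fin 3) (Fin 3) ℝ) :
    Measurable (fun R : Matrix (Fin 3) (Fin 3) ℝ => (Aᵀ * R).trace) := by
  simp only [aux_trace_transpose_mul]
  exact Finset.measurable_sum _ fun i _ => Finset.measurable_sum _ fun j _ =>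
    (aux_meas_entry i j).const_mul _


/-- KL divergence between two isotropic Matrix Fisher distributions `M(XλI)` and `M(X'λI)`
on SO(3): with `ν` the Haar measure on SO(3) (left invariant, supported on SO(3)),
normalizing constant `c`, and `Δ = XᵀX'`,
`D_KL(p_A‖p_B) = λ E_{Q~M(λI)}[tr Q − tr(ΔᵀQ)]`, and if `E_{Q~M(λI)}[Q] = a(λ) I`
then `D_KL(p_A‖p_B) = λ a(λ) (3 − tr Δ)`. -/
theorem stmt_11 (ν : Measure (Matrix (Fin 3) (Fin 3) ℝ))
    (hsupp : ∀ᵐ R ∂ν, IsSO3 R)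
    (hinv : ∀ U, IsSO3 U → MeasurePreserving (fun R => U * R) ν ν)
    (X X' : Matrix (Fin 3) (Fin 3) ℝ) (hX : IsSO3 X) (hX' : IsSO3 X')
    (l : ℝ) (hl : 0 < l)
    (c : ℝ) (hc : c = ∫ R, Real.exp (l * R.trace) ∂ν) (hcpos : 0 < c) :
    (∫ R, (Real.exp (l * (Xᵀ * R).trace) / c) *
          Real.log ((Real.exp (l * (Xᵀ * R).trace) / c) /
            (Real.exp (l * (X'ᵀ * R).trace) / c)) ∂ν) =
        l * ∫ R, (R.trace - ((Xᵀ * X')ᵀ * R).trace) * (Real.exp (l * R.trace) / c) ∂ν ∧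
      ∀ a : ℝ,
        (∀ i j, (∫ R, (Real.exp (l * R.trace) / c) * R i j ∂ν) =
            a * (1 : Matrix (Fin 3) (Fin 3) ℝ) i j) →
        (∫ R, (Real.exp (l * (Xᵀ * R).trace) / c) *
              Real.log ((Real.exp (l * (Xᵀ * R).trace) / c) /
                (Real.exp (l * (X'ᵀ * R).trace) / c)) ∂ν) =
          l * a * (3 - (Xᵀ * X').trace) := by
  have hcne : c ≠ 0 := ne_of_gt hcpos
  set Δ : Matrix (Fin 3) (Fin 3) ℝ := Xᵀ * X' with hΔdef
  -- log simplification
  have hlog : ∀ u v : ℝ,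
      Real.log ((Real.exp u / c) / (Real.exp v / c)) = u - v := by
    intro u v
    have h1 : (Real.exp u / c) / (Real.exp v / c) = Real.exp (u - v) := by
      rw [Real.exp_sub]; field_simp
    rw [h1, Real.log_exp]
  -- the function after log simplification
  set f : Matrix (Fin 3) (Fin 3) ℝ → ℝ := fun R =>
    (Real.exp (l * (Xᵀ * R).trace) / c) *
      (l * (Xᵀ * R).trace - l * (X'ᵀ * R).trace) with hfdef
  have hmf : Measurable f :=
    ((((aux_meas_traceMul X).const_mul l).exp).div_const c).mul
      (((aux_meas_traceMul X).const_mul l).sub ((aux_meas_traceMul X').const_mul l))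
  have hLHSf : (∫ R, (Real.exp (l * (Xᵀ * R).trace) / c) *
          Real.log ((Real.exp (l * (Xᵀ * R).trace) / c) /
            (Real.exp (l * (X'ᵀ * R).trace) / c)) ∂ν) = ∫ R, f R ∂ν := by
    refine integral_congr_ae (Filter.Eventually.of_forall fun R => ?_)
    dsimp only [hfdef]
    rw [hlog]
  -- change of variables R ↦ X * R
  have hmp := hinv X hX
  have hcov : ∫ R, f R ∂ν = ∫ R, f (X * R) ∂ν := by
    conv_lhs => rw [← hmp.map_eq]
    exact integral_map hmp.measurable.aemeasurable hmf.aestronglyMeasurable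
  have hfX : ∀ R : Matrix (Fin 3) (Fin 3) ℝ,
      f (X * R) = l * ((R.trace - (Δᵀ * R).trace) * (Real.exp (l * R.trace) / c)) := by
    intro R
    have h1 : Xᵀ * (X * R) = R := by rw [← Matrix.mul_assoc, hX.1, Matrix.one_mul]
    have h2 : X'ᵀ * (X * R) = Δᵀ * R := by
      rw [hΔdef, Matrix.transpose_mul, Matrix.transpose_transpose, Matrix.mul_assoc]
    rw [hfdef]
    simp only [h1, h2]
    ring
  have hpart1 : (∫ R, (Real.exp (l * (Xᵀ * R).trace) / c) *
          Real.log ((Real.exp (l * (Xᵀ * R).trace) / c) /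
            (Real.exp (l * (X'ᵀ * R).trace) / c)) ∂ν) =
        l * ∫ R, (R.trace - (Δᵀ * R).trace) * (Real.exp (l * R.trace) / c) ∂ν := by
    rw [hLHSf, hcov]
    simp only [hfX]
    exact integral_const_mul l _
  refine ⟨hpart1, ?_⟩
  intro a ha
  rw [hpart1]
  -- finiteness of ν
  have hintexp : Integrable (fun R => Real.exp (l * R.trace)) ν := by
    by_contra h
    rw [integral_undef h] at hc
    exact absurd hc (by linarith)
  have hfin : IsFiniteMeasure ν := by
    have hconst : Integrable (fun _ : Matrix (Fin 3) (Fin 3) ℝ => Real.exp (-(3 * l))) ν := by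
      refine hintexp.mono' aestronglyMeasurable_const ?_
      filter_upwards [hsupp] with R hR
      rw [Real.norm_eq_abs, abs_of_pos (Real.exp_pos _)]
      apply Real.exp_le_exp.mpr
      have htr : -3 ≤ R.trace := by
        have := abs_le.mp (aux_trace_le R hR.1)
        linarith [this.1]
      nlinarith
    rcases (integrable_const_iff).mp hconst with h | h
    · exact absurd h (ne_of_gt (Real.exp_pos _))
    · exact h
  -- integrability of entry integrands
  have hmw : Measurable (fun R : Matrix (Fin 3) (Fin 3) ℝ => Real.exp (l * R.trace) / c) :=
    ((aux_meas_trace.const_mul l).exp).div_const c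
  have hIij : ∀ i j, Integrable
      (fun R : Matrix (Fin 3) (Fin 3) ℝ => (Real.exp (l * R.trace) / c) * R i j) ν := by
    intro i j
    refine Integrable.mono' (integrable_const (Real.exp (3 * l) / c))
      ((hmw.mul (aux_meas_entry i j)).aestronglyMeasurable) ?_
    filter_upwards [hsupp] with R hR
    have h1 : |R i j| ≤ 1 := aux_entry_abs_le R hR.1 i j
    have hwpos : 0 < Real.exp (l * R.trace) / c := div_pos (Real.exp_pos _) hcpos
    have htr : R.trace ≤ 3 := (abs_le.mp (aux_trace_le R hR.1)).2
    have hwle : Real.exp (l * R.trace) / c ≤ Real.exp (3 * l) / c :=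
      (div_le_div_iff_of_pos_right hcpos).mpr (Real.exp_le_exp.mpr (by nlinarith))
    rw [Real.norm_eq_abs, abs_mul, abs_of_pos hwpos]
    calc Real.exp (l * R.trace) / c * |R i j| ≤ Real.exp (l * R.trace) / c * 1 :=
          mul_le_mul_of_nonneg_left h1 (le_of_lt hwpos)
      _ ≤ Real.exp (3 * l) / c := by rw [mul_one]; exact hwle
  have hkey : (∫ R, (R.trace - (Δᵀ * R).trace) * (Real.exp (l * R.trace) / c) ∂ν)
      = a * (3 - Δ.trace) := by
    have hdecomp : ∀ R : Matrix (Fin 3) (Fin 3) ℝ,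
        (R.trace - (Δᵀ * R).trace) * (Real.exp (l * R.trace) / c) =
        (∑ i, (Real.exp (l * R.trace) / c) * R i i) -
          ∑ i, ∑ j, Δ i j * ((Real.exp (l * R.trace) / c) * R i j) := by
      intro R
      rw [aux_trace_transpose_mul]
      have htr : R.trace = ∑ i, R i i := rfl
      rw [htr, sub_mul, Finset.sum_mul, Finset.sum_mul]
      congr 1
      · exact Finset.sum_congr rfl fun i _ => mul_comm _ _
      · refine Finset.sum_congr rfl fun i _ => ?_
        rw [Finset.sum_mul]
        exact Finset.sum_congr rfl fun j _ => by ring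
    simp only [hdecomp]
    have hIsum1 : Integrable (fun R : Matrix (Fin 3) (Fin 3) ℝ =>
        ∑ i, (Real.exp (l * R.trace) / c) * R i i) ν :=
      integrable_finset_sum _ fun i _ => hIij i i
    have hIsum2 : Integrable (fun R : Matrix (Fin 3) (Fin 3) ℝ =>
        ∑ i, ∑ j, Δ i j * ((Real.exp (l * R.trace) / c) * R i j)) ν :=
      integrable_finset_sum _ fun i _ =>
        integrable_finset_sum _ fun j _ => (hIij i j).const_mul _
    rw [integral_sub hIsum1 hIsum2,
        integral_finset_sum _ (fun i _ => hIij i i),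
        integral_finset_sum _ (f := fun i (R : Matrix (Fin 3) (Fin 3) ℝ) => ∑ j, Δ i j * ((Real.exp (l * R.trace) / c) * R i j)) (fun i _ =>
          integrable_finset_sum _ fun j _ => (hIij i j).const_mul _)]
    have h2 : ∀ i : Fin 3, (∫ R, ∑ j, Δ i j * ((Real.exp (l * R.trace) / c) * R i j) ∂ν)
        = ∑ j, Δ i j * (a * (1 : Matrix (Fin 3) (Fin 3) ℝ) i j) := by
      intro i
      rw [integral_finset_sum _ (fun j _ => (hIij i j).const_mul _)]
      exact Finset.sum_congr rfl fun j _ => by rw [integral_const_mul, ha i j]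
    have h1 : ∀ i : Fin 3, (∫ R, (Real.exp (l * R.trace) / c) * R i i ∂ν)
        = a * (1 : Matrix (Fin 3) (Fin 3) ℝ) i i := fun i => ha i i
    simp only [h1, h2]
    have htrΔ : Δ.trace = ∑ i, Δ i i := rfl
    rw [htrΔ]
    simp [Matrix.one_apply, mul_ite, mul_zero, mul_one, Finset.sum_ite_eq,
      Finset.mul_sum, Finset.sum_mul, mul_sub, Fin.sum_univ_three]
    ring
  rw [hkey]
  ring
end

section
/- For the softmax map applied to y ∈ ℝ^K, if y ~ N(β(Ke_c − 1), βKI) for β > 0 and e_c the c-th standard basis vector, then as β → ∞, softmax(y) converges in probability to e_c. -/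
open MeasureTheory ProbabilityTheory Filter

/-- Softmax map on `ℝ^K`. -/
noncomputable def softmax {K : ℕ} (y : Fin K → ℝ) : Fin K → ℝ :=
  fun k => Real.exp (y k) / ∑ j, Real.exp (y j)

/-- Marginal of a finite product of probability measures. -/
lemma pi_eval_apply {K : ℕ} (ν : Fin K → Measure ℝ) [∀ k, IsProbabilityMeasure (ν k)]
    (k : Fin K) (s : Set ℝ) :
    Measure.pi ν (Function.eval k ⁻¹' s) = ν k s := by
  rw [Set.eval_preimage, Measure.pi_pi]
  rw [Fintype.prod_eq_single k (fun j hj => by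
    rw [Function.update_of_ne hj]; exact measure_univ)]
  rw [Function.update_self]

lemma sqrt_tendsto_atTop : Tendsto Real.sqrt atTop atTop := by
  apply tendsto_atTop_atTop_of_monotone (fun a b hab => Real.sqrt_le_sqrt hab)
  intro b
  exact ⟨b ^ 2, by rw [Real.sqrt_sq_eq_abs]; exact le_abs_self b⟩

lemma tail_tendsto (g : Measure ℝ) [IsProbabilityMeasure g] :
    Tendsto (fun t : ℝ => g {x | t ≤ |x|}) atTop (nhds 0) := by
  have h := tendsto_measure_iInter_atTop (μ := g) (s := fun t : ℝ => {x | t ≤ |x|})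
    (fun t => ((measurableSet_le measurable_const measurable_id.abs)).nullMeasurableSet)
    (fun a b hab x hx => le_trans hab hx) ⟨0, measure_ne_top _ _⟩
  have hempty : (⋂ t : ℝ, {x : ℝ | t ≤ |x|}) = ∅ := by
    ext x
    simp only [Set.mem_iInter, Set.mem_setOf_eq, Set.mem_empty_iff_false, iff_false, not_forall,
      not_le]
    exact ⟨|x| + 1, lt_add_one _⟩
  rwa [hempty, measure_empty] at h

/-- Gaussian tail probabilities reduce to the standard Gaussian. -/
lemma gaussian_tail_eq (m : ℝ) (v : NNReal) (hv : 0 < (v : ℝ)) (a : ℝ) :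
    gaussianReal m v {x | a ≤ |x - m|}
      = gaussianReal 0 1 {x | a / Real.sqrt v ≤ |x|} := by
  set s : ℝ := Real.sqrt v with hs
  have hs0 : 0 < s := Real.sqrt_pos.mpr hv
  have h1 : (gaussianReal 0 1).map (s * ·) = gaussianReal 0 v := by
    rw [gaussianReal_map_const_mul]
    congr 1
    · ring
    · ext
      simp [hs, Real.sq_sqrt hv.le]
  have h2 : gaussianReal m v = ((gaussianReal 0 1).map (s * ·)).map (· + m) := by
    rw [h1, gaussianReal_map_add_const, zero_add]
  have hms : MeasurableSet {x : ℝ | a ≤ |x - m|} :=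
    measurableSet_le measurable_const (measurable_id.sub_const m).abs
  rw [h2, Measure.map_apply (measurable_add_const m) hms,
    Measure.map_apply (measurable_const_mul s) ((measurable_add_const m) hms)]
  congr 1
  ext x
  simp only [Set.mem_preimage, Set.mem_setOf_eq, add_sub_cancel_right]
  rw [abs_mul, abs_of_pos hs0, div_le_iff₀' hs0]

/-- Deterministic estimate: if all other coordinates are at least `M` below `y c`,
then `softmax y` is within `K * exp (-M)` of the one-hot vector at `c`. -/
lemma softmax_dist_le {K : ℕ} (hK : 0 < K) (c : Fin K) (y : Fin K → ℝ) (M : ℝ)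
    (h : ∀ j, j ≠ c → y j ≤ y c - M) :
    dist (softmax y) (fun k => if k = c then (1 : ℝ) else 0) ≤ K * Real.exp (-M) := by
  haveI : Nonempty (Fin K) := ⟨c⟩
  set S : ℝ := ∑ j, Real.exp (y j) with hSdef
  have hS : 0 < S := Finset.sum_pos (fun j _ => Real.exp_pos _) Finset.univ_nonempty
  have hSc : Real.exp (y c) ≤ S :=
    Finset.single_le_sum (fun j _ => (Real.exp_pos (y j)).le) (Finset.mem_univ c)
  have key : ∀ j, j ≠ c → Real.exp (y j) ≤ Real.exp (y c) * Real.exp (-M) := by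
    intro j hj
    rw [← Real.exp_add]
    exact Real.exp_le_exp.mpr (by linarith [h j hj])
  have hK1 : (1 : ℝ) ≤ K := by exact_mod_cast hK
  rw [dist_pi_le_iff (by positivity)]
  intro i
  by_cases hi : i = c
  · subst hi
    simp only [softmax, eq_self_iff_true, if_true, Real.dist_eq]
    rw [← hSdef]
    have hle : Real.exp (y i) / S ≤ 1 := (div_le_one hS).mpr hSc
    rw [abs_of_nonpos (by linarith)]
    have hsum : S - Real.exp (y i) = ∑ j ∈ Finset.univ.erase i, Real.exp (y j) := by
      rw [Finset.sum_erase_eq_sub (Finset.mem_univ i)]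
    have hbound : S - Real.exp (y i)
        ≤ (K : ℝ) * Real.exp (-M) * Real.exp (y i) := by
      rw [hsum]
      calc ∑ j ∈ Finset.univ.erase i, Real.exp (y j)
          ≤ ∑ _j ∈ Finset.univ.erase i, Real.exp (y i) * Real.exp (-M) :=
            Finset.sum_le_sum (fun j hj => key j (Finset.ne_of_mem_erase hj))
        _ = ((Finset.univ.erase i).card : ℝ) * (Real.exp (y i) * Real.exp (-M)) := by
            rw [Finset.sum_const, nsmul_eq_mul]
        _ ≤ (K : ℝ) * (Real.exp (y i) * Real.exp (-M)) := by
            apply mul_le_mul_of_nonneg_right _ (by positivity)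
            have : (Finset.univ.erase i).card ≤ K := by
              simpa using (Finset.card_erase_le (s := (Finset.univ : Finset (Fin K)))).trans
                (by simp)
            exact_mod_cast this
        _ = (K : ℝ) * Real.exp (-M) * Real.exp (y i) := by ring
    have heq : -(Real.exp (y i) / S - 1) = (S - Real.exp (y i)) / S := by
      field_simp
      ring
    rw [heq]
    calc (S - Real.exp (y i)) / S
        ≤ ((K : ℝ) * Real.exp (-M) * Real.exp (y i)) / Real.exp (y i) := by
          apply div_le_div₀ (by positivity) hbound (Real.exp_pos _) hSc
      _ = (K : ℝ) * Real.exp (-M) := mul_div_cancel_right₀ _ (Real.exp_ne_zero _)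
  · simp only [softmax, if_neg hi, Real.dist_eq, sub_zero]
    rw [abs_of_nonneg (by positivity)]
    calc Real.exp (y i) / S
        ≤ (Real.exp (y c) * Real.exp (-M)) / Real.exp (y c) :=
          div_le_div₀ (by positivity) (key i hi) (Real.exp_pos _) hSc
      _ = Real.exp (-M) := mul_div_cancel_left₀ _ (Real.exp_ne_zero _)
      _ ≤ (K : ℝ) * Real.exp (-M) := by nlinarith [Real.exp_pos (-M)]

/-- If `y ~ N(β(K e_c − 1), βK I)` then, as `β → ∞`, `softmax(y)` converges in probability
to the one-hot vector `e_c`. -/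
theorem stmt_18 (K : ℕ) (hK : 0 < K) (c : Fin K) :
    ∀ ε > (0 : ℝ),
      Tendsto
        (fun β : ℝ =>
          (Measure.pi fun k : Fin K =>
              gaussianReal (β * ((K : ℝ) * (if k = c then (1 : ℝ) else 0) - 1))
                (Real.toNNReal (β * K)))
            {y : Fin K → ℝ |
              ε ≤ dist (softmax y) (fun k => if k = c then (1 : ℝ) else 0)})
        atTop (nhds 0) := by
  intro ε hε
  have hK1 : (1 : ℝ) ≤ K := by exact_mod_cast hK
  -- choose M with K * exp(-M) < ε
  obtain ⟨M, hMε, hM0⟩ : ∃ M : ℝ, (K : ℝ) * Real.exp (-M) < ε ∧ 0 ≤ M := by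
    have h : Tendsto (fun M : ℝ => (K : ℝ) * Real.exp (-M)) atTop (nhds 0) := by
      simpa using (Real.tendsto_exp_neg_atTop_nhds_zero.const_mul (K : ℝ))
    exact ((h.eventually_lt_const hε).and (eventually_ge_atTop 0)).exists
  set g : Measure ℝ := gaussianReal 0 1 with hg
  set T : ℝ → ENNReal := fun β => g {x | Real.sqrt (β * K) / 4 ≤ |x|} with hT
  -- T tends to 0
  have hTlim : Tendsto T atTop (nhds 0) := by
    apply (tail_tendsto g).comp
    apply Tendsto.atTop_div_const (by norm_num : (0:ℝ) < 4)
    exact sqrt_tendsto_atTop.comp (tendsto_id.atTop_mul_const (by positivity : (0:ℝ) < K))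
  -- eventual bound
  have hbound : ∀ᶠ β : ℝ in atTop,
      (Measure.pi fun k : Fin K =>
          gaussianReal (β * ((K : ℝ) * (if k = c then (1 : ℝ) else 0) - 1))
            (Real.toNNReal (β * K)))
        {y : Fin K → ℝ | ε ≤ dist (softmax y) (fun k => if k = c then (1 : ℝ) else 0)}
        ≤ (K : ENNReal) * T β := by
    filter_upwards [eventually_gt_atTop 0, eventually_ge_atTop (2 * M / K)] with β hβ hβM
    have hβK : 0 < β * K := by positivity
    have hβM' : M ≤ β * K / 2 := by
      rw [div_le_iff₀ (by positivity : (0:ℝ) < (K:ℝ))] at hβM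
      linarith
    set m : Fin K → ℝ := fun k => β * ((K : ℝ) * (if k = c then (1 : ℝ) else 0) - 1) with hm
    set ν : Fin K → Measure ℝ := fun k => gaussianReal (m k) (Real.toNNReal (β * K)) with hν
    have hvpos : 0 < ((Real.toNNReal (β * K)) : ℝ) := by
      rw [Real.coe_toNNReal _ hβK.le]; exact hβK
    -- inclusion into a union of coordinate tails
    have hsub : {y : Fin K → ℝ | ε ≤ dist (softmax y) (fun k => if k = c then (1 : ℝ) else 0)}
        ⊆ ⋃ k, Function.eval k ⁻¹' {x : ℝ | β * K / 4 ≤ |x - m k|} := by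
      intro y hy
      by_contra hnot
      rw [Set.mem_iUnion] at hnot
      push_neg at hnot
      have hclose : ∀ k, |y k - m k| < β * K / 4 := by
        intro k
        have := hnot k
        simp only [Set.mem_preimage, Set.mem_setOf_eq, not_le, Function.eval] at this
        exact this
      have hsep : ∀ j, j ≠ c → y j ≤ y c - M := by
        intro j hj
        have hmj : m j = -β := by simp [hm, if_neg hj]
        have hmc : m c = β * ((K : ℝ) - 1) := by simp [hm]
        have h1 := abs_lt.mp (hclose j)
        have h2 := abs_lt.mp (hclose c)
        rw [hmj] at h1; rw [hmc] at h2
        nlinarith [h1.1, h1.2, h2.1, h2.2]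
      have := softmax_dist_le hK c y M hsep
      have hεle : ε ≤ (K : ℝ) * Real.exp (-M) := le_trans hy this
      linarith
    calc (Measure.pi ν)
          {y : Fin K → ℝ | ε ≤ dist (softmax y) (fun k => if k = c then (1 : ℝ) else 0)}
        ≤ (Measure.pi ν) (⋃ k, Function.eval k ⁻¹' {x : ℝ | β * K / 4 ≤ |x - m k|}) :=
          measure_mono hsub
      _ ≤ ∑ k, (Measure.pi ν) (Function.eval k ⁻¹' {x : ℝ | β * K / 4 ≤ |x - m k|}) :=
          measure_iUnion_fintype_le _ _
      _ = ∑ k : Fin K, T β := by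
          apply Finset.sum_congr rfl
          intro k _
          rw [pi_eval_apply, hν]
          rw [gaussian_tail_eq (m k) _ hvpos]
          have hsq : Real.sqrt ((Real.toNNReal (β * K)) : ℝ) = Real.sqrt (β * K) := by
            rw [Real.coe_toNNReal _ hβK.le]
          rw [hsq]
          have hsqrtpos : 0 < Real.sqrt (β * K) := Real.sqrt_pos.mpr hβK
          have hdiv : β * K / 4 / Real.sqrt (β * K) = Real.sqrt (β * K) / 4 := by
            rw [div_div, div_eq_div_iff (by positivity) (by norm_num : (4:ℝ) ≠ 0)]
            nlinarith [Real.mul_self_sqrt hβK.le]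
          rw [hdiv]
      _ = (K : ENNReal) * T β := by
          rw [Finset.sum_const, Finset.card_univ, Fintype.card_fin, nsmul_eq_mul]
  -- conclude by squeezing
  have hlim : Tendsto (fun β => (K : ENNReal) * T β) atTop (nhds 0) := by
    have := ENNReal.Tendsto.const_mul (a := (K : ENNReal)) hTlim
      (Or.inr (by simp : (K : ENNReal) ≠ ⊤))
    simpa using this
  exact tendsto_of_tendsto_of_tendsto_of_le_of_le' tendsto_const_nhds hlim
    (Eventually.of_forall fun β => zero_le) hbound
end
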